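/- Let v be a piecewise linear continuous function on the boundary ∂E of a polygon E whose edges all have length comparable to the diameter h of E (|ε| ≥ c̃ h for each edge ε). Then ‖v‖_{∞,∂E} ≤ C ( |v|_{1/2,∂E} + h^{−1/2} ‖v‖_{0,∂E} ), with C depending only on the shape-regularity constants and not on h. -/

import Mathlib

open MeasureTheory
open scoped ENNReal

/-- L²(Γ) norm of `v` on a boundary `Γ ⊂ ℝ²`, w.r.t. the 1-dimensional
Hausdorff measure. -/
noncomputable def bdryL2 (Γ : Set (EuclideanSpace ℝ (Fin 2)))
    (v : EuclideanSpace ℝ (Fin 2) → ℝ) : ℝ :=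
  Real.sqrt ((∫⁻ x in Γ, (‖v x‖₊ : ℝ≥0∞) ^ 2 ∂(μH[1])).toReal)

/-- H^{1/2}(Γ) (Gagliardo) seminorm of `v` on `Γ ⊂ ℝ²`, w.r.t. the
1-dimensional Hausdorff measure. -/
noncomputable def bdryHhalf (Γ : Set (EuclideanSpace ℝ (Fin 2)))
    (v : EuclideanSpace ℝ (Fin 2) → ℝ) : ℝ :=
  Real.sqrt ((∫⁻ x in Γ, ∫⁻ y in Γ,
    (‖v x - v y‖₊ : ℝ≥0∞) ^ 2 / (edist x y) ^ 2 ∂(μH[1]) ∂(μH[1])).toReal)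

set_option maxHeartbeats 2000000 in
/-- For piecewise linear continuous functions `v` on the boundary
∂E of a shape-regular polygon E of diameter h (edges of length ≥ c̃ h,
star-shaped with respect to a ball of radius ρ h),
‖v‖_{∞,∂E} ≤ C ( |v|_{1/2,∂E} + h^{−1/2} ‖v‖_{0,∂E} ), with C depending only
on the shape constants ρ, c̃ and not on h. -/
theorem stmt_19 (ρ ctil : ℝ) (hρ : 0 < ρ) (hctil : 0 < ctil) :
    ∃ C : ℝ, 0 < C ∧
      ∀ (N : ℕ) (hN : 3 ≤ N)
        (w : Fin N → EuclideanSpace ℝ (Fin 2)) (h : ℝ), 0 < h →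
      ∀ (Eset Γ : Set (EuclideanSpace ℝ (Fin 2))),
        Γ = (⋃ i : Fin N, segment ℝ (w i) (w ⟨(i.1 + 1) % N, Nat.mod_lt _ (by omega)⟩)) →
        Γ = frontier Eset →
        Metric.diam Eset = h →
        (∀ i : Fin N, ctil * h ≤ dist (w i) (w ⟨(i.1 + 1) % N, Nat.mod_lt _ (by omega)⟩)) →
        (∃ x₀ : EuclideanSpace ℝ (Fin 2), Metric.ball x₀ (ρ * h) ⊆ Eset ∧
          ∀ c ∈ Metric.ball x₀ (ρ * h), StarConvex ℝ c Eset) →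
        ∀ v : EuclideanSpace ℝ (Fin 2) → ℝ, ContinuousOn v Γ →
        (∀ i : Fin N, ∃ (l : EuclideanSpace ℝ (Fin 2) →ₗ[ℝ] ℝ) (c : ℝ),
          ∀ x ∈ segment ℝ (w i) (w ⟨(i.1 + 1) % N, Nat.mod_lt _ (by omega)⟩), v x = l x + c) →
        (⨆ x : Γ, |v (x : EuclideanSpace ℝ (Fin 2))|) ≤
          C * (bdryHhalf Γ v + (Real.sqrt h)⁻¹ * bdryL2 Γ v) := by

  classical
  have hsc : 0 < Real.sqrt ctil := Real.sqrt_pos.2 hctil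
  refine ⟨4 / Real.sqrt ctil, by positivity, ?_⟩
  intro N hN w h hh Eset Γ hΓ hΓfr hdiam hedges hstar v hv hlin
  -- Γ is compact and nonempty
  have hsegcomp : ∀ a b : EuclideanSpace ℝ (Fin 2), IsCompact (segment ℝ a b) := by
    intro a b
    rw [segment_eq_image']
    exact isCompact_Icc.image (by continuity)
  have hcomp : IsCompact Γ := by
    rw [hΓ]; exact isCompact_iUnion fun i => hsegcomp _ _
  have hΓne : Γ.Nonempty := by
    refine ⟨w ⟨0, by omega⟩, ?_⟩
    rw [hΓ]
    exact Set.mem_iUnion.2 ⟨⟨0, by omega⟩, left_mem_segment ℝ _ _⟩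
  -- maximum of |v| on Γ
  obtain ⟨z, hzΓ, hmax⟩ := hcomp.exists_isMaxOn hΓne hv.abs
  have hbound : ∀ x ∈ Γ, |v x| ≤ |v z| := fun x hx => hmax hx
  set M := |v z| with hMdef
  have hM0 : 0 ≤ M := abs_nonneg _
  -- the segment containing z
  have hzU : z ∈ ⋃ i : Fin N,
      segment ℝ (w i) (w ⟨(i.1 + 1) % N, Nat.mod_lt _ (by omega)⟩) := by
    rw [← hΓ]; exact hzΓ
  obtain ⟨i, hzseg⟩ := Set.mem_iUnion.1 hzU
  set a := w i with ha
  set b := w ⟨(i.1 + 1) % N, Nat.mod_lt _ (by omega)⟩ with hb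
  have hlen : ctil * h ≤ dist a b := hedges i
  have hsegΓ : segment ℝ a b ⊆ Γ := by
    rw [hΓ]
    exact Set.subset_iUnion
      (fun j : Fin N => segment ℝ (w j) (w ⟨(j.1 + 1) % N, Nat.mod_lt _ (by omega)⟩)) i
  obtain ⟨l, c, hlc⟩ := hlin i
  -- affine behaviour of v along the segment
  have haff : ∀ x ∈ segment ℝ a b, ∀ y ∈ segment ℝ a b, ∀ t : ℝ, 0 ≤ t → t ≤ 1 →
      v (x + t • (y - x)) = v x + t * (v y - v x) := by
    intro x hx y hy t ht0 ht1
    have hmem : x + t • (y - x) ∈ segment ℝ a b := by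
      have h2 := (convex_segment a b) hx hy (by linarith : (0:ℝ) ≤ 1 - t) ht0 (by ring)
      have h3 : x + t • (y - x) = (1 - t) • x + t • y := by
        rw [smul_sub, sub_smul, one_smul]; abel
      rwa [h3]
    rw [hlc _ hmem, hlc x hx, hlc y hy]
    simp only [map_add, LinearMap.map_smul, map_sub, smul_eq_mul]
    ring
  have hamem : a ∈ segment ℝ a b := left_mem_segment ℝ a b
  have hbmem : b ∈ segment ℝ a b := right_mem_segment ℝ a b
  -- M is at most the max of the endpoint values
  have hMmax : M ≤ max |v a| |v b| := by
    rw [segment_eq_image'] at hzseg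
    obtain ⟨t, ht, hteq⟩ := hzseg
    have hval := haff a hamem b hbmem t ht.1 ht.2
    have h1 : v z = (1 - t) * v a + t * v b := by
      rw [← hteq, hval]; ring
    have h2 : M ≤ (1 - t) * |v a| + t * |v b| := by
      rw [hMdef, h1]
      calc |(1 - t) * v a + t * v b| ≤ |(1 - t) * v a| + |t * v b| := abs_add_le _ _
        _ = (1 - t) * |v a| + t * |v b| := by
            rw [abs_mul, abs_mul, abs_of_nonneg (by linarith [ht.2] : (0:ℝ) ≤ 1 - t),
              abs_of_nonneg ht.1]
    nlinarith [le_max_left |v a| |v b|, le_max_right |v a| |v b|, ht.1, ht.2,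
      abs_nonneg (v a), abs_nonneg (v b)]
  -- pick the endpoint where |v| is maximal
  obtain ⟨p, q, hpq, hvpM, hdpq⟩ :
      ∃ p q, segment ℝ p q = segment ℝ a b ∧ M ≤ |v p| ∧ dist p q = dist a b := by
    rcases le_max_iff.1 hMmax with hA | hB
    · exact ⟨a, b, rfl, hA, rfl⟩
    · exact ⟨b, a, (segment_symm ℝ a b).symm, hB, dist_comm b a⟩
  have hp : p ∈ segment ℝ a b := hpq ▸ left_mem_segment ℝ p q
  have hq : q ∈ segment ℝ a b := hpq ▸ right_mem_segment ℝ p q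
  have hpΓ : p ∈ Γ := hsegΓ hp
  have hqΓ : q ∈ Γ := hsegΓ hq
  -- the quarter subsegment S near p
  set m := p + (4:ℝ)⁻¹ • (q - p) with hm
  have hmmem : m ∈ segment ℝ a b := by
    rw [← hpq, segment_eq_image']
    exact ⟨(4:ℝ)⁻¹, ⟨by norm_num, by norm_num⟩, rfl⟩
  set S := segment ℝ p m with hS
  have hSsub : S ⊆ segment ℝ a b := (convex_segment a b).segment_subset hp hmmem
  have hSΓ : S ⊆ Γ := hSsub.trans hsegΓ
  have hSmeas : MeasurableSet S := (hsegcomp p m).measurableSet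
  -- on S, |v| ≥ M/2
  have hhalf : ∀ x ∈ S, M / 2 ≤ |v x| := by
    intro x hx
    rw [hS, segment_eq_image'] at hx
    obtain ⟨u, hu, hueq⟩ := hx
    have hmp : m - p = (4:ℝ)⁻¹ • (q - p) := by rw [hm, add_sub_cancel_left]
    have hrw : p + u • (m - p) = p + (u * 4⁻¹) • (q - p) := by
      rw [hmp, smul_smul]
    have hs0 : (0:ℝ) ≤ u * 4⁻¹ := mul_nonneg hu.1 (by norm_num)
    have hs4 : u * 4⁻¹ ≤ 4⁻¹ := mul_le_of_le_one_left (by norm_num) hu.2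
    have hval := haff p hp q hq (u * 4⁻¹) hs0 (by linarith)
    have hueq' : p + (u * 4⁻¹) • (q - p) = x := by rw [← hrw]; exact hueq
    have hvx : v x = v p + (u * 4⁻¹) * (v q - v p) := by rw [← hueq', hval]
    have h2M : |v q - v p| ≤ 2 * M := by
      calc |v q - v p| ≤ |v q| + |v p| := abs_sub _ _
        _ ≤ 2 * M := by linarith [hbound q hqΓ, hbound p hpΓ]
    have habs : |v p| - |(u * 4⁻¹) * (v q - v p)| ≤ |v p + (u * 4⁻¹) * (v q - v p)| := by
      have h3 := abs_sub_abs_le_abs_sub (v p) (-((u * 4⁻¹) * (v q - v p)))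
      rw [abs_neg, sub_neg_eq_add] at h3
      exact h3
    have hprod : (u * 4⁻¹) * |v q - v p| ≤ 4⁻¹ * (2 * M) :=
      mul_le_mul hs4 h2M (abs_nonneg _) (by norm_num)
    rw [hvx]
    have h4 : |(u * 4⁻¹) * (v q - v p)| = (u * 4⁻¹) * |v q - v p| := by
      rw [abs_mul, abs_of_nonneg hs0]
    linarith [habs, hprod, hvpM, h4]
  -- measure of S
  have hdm : dist p m = dist a b / 4 := by
    rw [hm, dist_self_add_right, norm_smul, ← hdpq]
    rw [show ‖q - p‖ = dist q p from (dist_eq_norm q p).symm, dist_comm q p]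
    norm_num
    ring
  have hmesS : μH[1] S = ENNReal.ofReal (dist a b / 4) := by
    rw [hS, hausdorffMeasure_segment, edist_dist, hdm]
  -- the L² integral, finiteness
  have hΓfin : μH[1] Γ < ∞ := by
    rw [hΓ]
    refine lt_of_le_of_lt (measure_iUnion_le _) ?_
    rw [tsum_fintype]
    refine ENNReal.sum_lt_top.2 fun j _ => ?_
    rw [hausdorffMeasure_segment]
    exact edist_lt_top _ _
  set T := ∫⁻ x in Γ, (‖v x‖₊ : ℝ≥0∞) ^ 2 ∂(μH[1]) with hT
  have hTtop : T ≠ ∞ := by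
    have hb : T ≤ ∫⁻ _ in Γ, ENNReal.ofReal (M ^ 2) ∂(μH[1]) := by
      refine lintegral_mono_ae ?_
      filter_upwards [ae_restrict_mem hcomp.measurableSet] with x hx
      have h1 : ‖v x‖ ≤ M := by rw [Real.norm_eq_abs]; exact hbound x hx
      calc (‖v x‖₊ : ℝ≥0∞) ^ 2 = ENNReal.ofReal ‖v x‖ ^ 2 := by
            rw [ofReal_norm, enorm_eq_nnnorm]
        _ ≤ ENNReal.ofReal M ^ 2 := by gcongr
        _ = ENNReal.ofReal (M ^ 2) := by rw [← ENNReal.ofReal_pow hM0]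
    refine ne_of_lt (lt_of_le_of_lt hb ?_)
    rw [setLIntegral_const]
    exact ENNReal.mul_lt_top ENNReal.ofReal_lt_top hΓfin
  -- lower bound on T
  have hlb : ENNReal.ofReal ((M / 2) ^ 2) * μH[1] S ≤ T := by
    rw [← setLIntegral_const S (ENNReal.ofReal ((M / 2) ^ 2))]
    refine le_trans (lintegral_mono_ae ?_) (lintegral_mono_set hSΓ)
    filter_upwards [ae_restrict_mem hSmeas] with x hx
    have h1 : M / 2 ≤ ‖v x‖ := by rw [Real.norm_eq_abs]; exact hhalf x hx
    calc ENNReal.ofReal ((M / 2) ^ 2) = ENNReal.ofReal (M / 2) ^ 2 := by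
          rw [← ENNReal.ofReal_pow (by positivity)]
      _ ≤ ENNReal.ofReal ‖v x‖ ^ 2 := by gcongr
      _ = (‖v x‖₊ : ℝ≥0∞) ^ 2 := by rw [ofReal_norm, enorm_eq_nnnorm]
  have hlbR : (M / 2) ^ 2 * (dist a b / 4) ≤ T.toReal := by
    have h2 := ENNReal.toReal_mono hTtop hlb
    rwa [ENNReal.toReal_mul, ENNReal.toReal_ofReal (by positivity), hmesS,
      ENNReal.toReal_ofReal (div_nonneg dist_nonneg (by norm_num))] at h2
  -- convert to the L² norm
  have hL2def : bdryL2 Γ v = Real.sqrt T.toReal := rfl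
  have hkey : M * Real.sqrt ctil * Real.sqrt h / 4 ≤ bdryL2 Γ v := by
    rw [hL2def]
    have hnn : 0 ≤ M * Real.sqrt ctil * Real.sqrt h / 4 :=
      div_nonneg (mul_nonneg (mul_nonneg hM0 (Real.sqrt_nonneg _)) (Real.sqrt_nonneg _))
        (by norm_num)
    have h1 : (M * Real.sqrt ctil * Real.sqrt h / 4) ^ 2 ≤ T.toReal := by
      have heq : (M * Real.sqrt ctil * Real.sqrt h / 4) ^ 2 = (M / 2) ^ 2 * (ctil * h / 4) := by
        rw [div_pow, mul_pow, mul_pow, Real.sq_sqrt hctil.le, Real.sq_sqrt hh.le]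
        ring
      rw [heq]
      refine le_trans ?_ hlbR
      gcongr
    calc M * Real.sqrt ctil * Real.sqrt h / 4
        = Real.sqrt ((M * Real.sqrt ctil * Real.sqrt h / 4) ^ 2) := (Real.sqrt_sq hnn).symm
      _ ≤ Real.sqrt T.toReal := Real.sqrt_le_sqrt h1
  -- assemble
  have hsqh : 0 < Real.sqrt h := Real.sqrt_pos.2 hh
  have hfin : M ≤ 4 / Real.sqrt ctil * ((Real.sqrt h)⁻¹ * bdryL2 Γ v) := by
    have hsh' : Real.sqrt h ≠ 0 := ne_of_gt hsqh
    have hsc' : Real.sqrt ctil ≠ 0 := ne_of_gt hsc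
    have hinv : (Real.sqrt h)⁻¹ * Real.sqrt h = 1 := inv_mul_cancel₀ hsh'
    have h2 : M * Real.sqrt ctil / 4 ≤ (Real.sqrt h)⁻¹ * bdryL2 Γ v := by
      have h3 := mul_le_mul_of_nonneg_left hkey (inv_nonneg.2 hsqh.le)
      calc M * Real.sqrt ctil / 4
          = (Real.sqrt h)⁻¹ * Real.sqrt h * (M * Real.sqrt ctil / 4) := by rw [hinv, one_mul]
        _ = (Real.sqrt h)⁻¹ * (M * Real.sqrt ctil * Real.sqrt h / 4) := by ring
        _ ≤ (Real.sqrt h)⁻¹ * bdryL2 Γ v := h3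
    have hinv2 : Real.sqrt ctil / 4 * (4 / Real.sqrt ctil) = 1 := by
      field_simp
    calc M = M * (Real.sqrt ctil / 4 * (4 / Real.sqrt ctil)) := by rw [hinv2, mul_one]
      _ = 4 / Real.sqrt ctil * (M * Real.sqrt ctil / 4) := by ring
      _ ≤ 4 / Real.sqrt ctil * ((Real.sqrt h)⁻¹ * bdryL2 Γ v) := by
          exact mul_le_mul_of_nonneg_left h2 (by positivity)
  haveI : Nonempty Γ := hΓne.to_subtype
  refine le_trans (ciSup_le fun x => hmax x.2) (le_trans hfin ?_)
  have hH : 0 ≤ bdryHhalf Γ v := Real.sqrt_nonneg _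
  have hL : 0 ≤ (Real.sqrt h)⁻¹ * bdryL2 Γ v :=
    mul_nonneg (inv_nonneg.2 hsqh.le) (Real.sqrt_nonneg _)
  have hC0 : (0:ℝ) ≤ 4 / Real.sqrt ctil := by positivity
  exact mul_le_mul_of_nonneg_left (le_add_of_nonneg_left hH) hC0
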